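/- arXiv:math/0311480 — 2 statements merged into one kernel-verified Lean document; each statement's English description precedes it below -/
import Mathlib

section
/- Let κ ∈ ℂ with Re(κ) ≥ 2 and suppose κ is exponentially κ-bounded for n ≥ 2 steps. Let f_n(κ) = E_κ^{n-1}(κ) (as a holomorphic function of the parameter κ). Then |f_n'(κ)| ≥ F^{n-1}(Re(κ) - 1), where F(t) = e^t - 1. -/
/-- Model function for exponential growth: F(t) = e^t - 1. -/
noncomputable def F (t : ℝ) : ℝ := Real.exp t - 1

/-- The exponential map E_κ(z) = exp(z) + κ. -/
noncomputable def E (κ : ℂ) (z : ℂ) : ℂ := Complex.exp z + κ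

/-- κ is exponentially κ-bounded for n steps. -/
def ExpBounded (κ : ℂ) (n : ℕ) : Prop :=
  4 ≤ κ.re ∧
  (∀ k : ℕ, k < n → |((E κ)^[k] κ).im| < F^[k] (κ.re - 2)) ∧
  (∀ k : ℕ, k + 1 < n → 0 < ((E κ)^[k] κ).re)

/-- The map f_n(κ) = E_κ^{n-1}(κ) as a function of the parameter κ. -/
noncomputable def f (n : ℕ) (κ : ℂ) : ℂ := (E κ)^[n - 1] κ

/-- The derivative of the parameter map `κ ↦ (E κ)^[m] κ` at `κ`. -/
noncomputable def D (κ : ℂ) : ℕ → ℂ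
  | 0 => 1
  | m+1 => Complex.exp ((E κ)^[m] κ) * D κ m + 1

lemma hasDerivAt_iter (κ : ℂ) (m : ℕ) :
    HasDerivAt (fun z : ℂ => (E z)^[m] z) (D κ m) κ := by
  induction m with
  | zero => simpa [D] using (hasDerivAt_id' κ)
  | succ m ih =>
    have heq : (fun z : ℂ => (E z)^[m+1] z) = fun z => Complex.exp ((E z)^[m] z) + z := by
      funext z
      rw [Function.iterate_succ_apply']
      rfl
    rw [heq]
    have := ih.cexp.add (hasDerivAt_id' κ)
    exact this

lemma le_F (t : ℝ) : t ≤ F t := by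
  have := Real.add_one_le_exp t
  simp only [F]; linarith

lemma le_F_iter (k : ℕ) (t : ℝ) : t ≤ F^[k] t := by
  induction k with
  | zero => simp
  | succ k ih =>
    rw [Function.iterate_succ_apply']
    exact ih.trans (le_F _)

lemma F_gap : ∀ (k : ℕ) (s t : ℝ), 0 ≤ s → s + 1 ≤ t → F^[k] s + 1 ≤ F^[k] t := by
  intro k
  induction k with
  | zero => intro s t _ h; simpa using h
  | succ k ih =>
    intro s t hs hst
    rw [Function.iterate_succ_apply, Function.iterate_succ_apply]
    apply ih
    · have : (1:ℝ) ≤ Real.exp s := Real.one_le_exp hs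
      simp only [F]; linarith
    · simp only [F]
      have h1 : (1:ℝ) ≤ Real.exp s := Real.one_le_exp hs
      have h2 : Real.exp (s+1) ≤ Real.exp t := Real.exp_le_exp.2 hst
      have h3 : Real.exp (s+1) = Real.exp s * Real.exp 1 := Real.exp_add s 1
      have h4 : (2:ℝ) ≤ Real.exp 1 := by
        have := Real.add_one_le_exp 1; linarith
      nlinarith [Real.exp_pos s]

lemma sin_cos_contradiction (s co : ℝ) (hpy : s ^ 2 + co ^ 2 = 1)
    (hss : |s| * Real.exp 2 ≤ 3)
    (hcon : co < Real.exp (-1)) (hcl : -Real.exp (-1) < co) : False := by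
  have he2 : (7:ℝ) < Real.exp 2 := by
    have h1 : (2.7:ℝ) < Real.exp 1 := by
      have := Real.exp_one_gt_d9; linarith
    have h2 : Real.exp 2 = Real.exp 1 * Real.exp 1 := by
      rw [← Real.exp_add]; norm_num
    nlinarith
  have he2u : Real.exp 2 < 8 := by
    have h1 : Real.exp 1 < 2.7182818286 := Real.exp_one_lt_d9
    have h2 : Real.exp 2 = Real.exp 1 * Real.exp 1 := by
      rw [← Real.exp_add]; norm_num
    nlinarith [Real.exp_pos 1]
  have hs2 : s ^ 2 * Real.exp 2 ^ 2 ≤ 9 := by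
    have h := mul_le_mul hss hss (mul_nonneg (abs_nonneg _) (Real.exp_pos 2).le)
      (by norm_num)
    nlinarith [sq_abs s]
  have hc2 : co ^ 2 < Real.exp (-1) ^ 2 := by nlinarith
  have hinv : Real.exp (-1) ^ 2 * Real.exp 2 = 1 := by
    rw [sq, ← Real.exp_add, ← Real.exp_add]; norm_num
  have hie : Real.exp (-1) ^ 2 * Real.exp 2 ^ 2 = Real.exp 2 := by
    have h : Real.exp (-1) ^ 2 * Real.exp 2 ^ 2
        = (Real.exp (-1) ^ 2 * Real.exp 2) * Real.exp 2 := by ring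
    rw [h, hinv, one_mul]
  have h1 : co ^ 2 * Real.exp 2 ^ 2 < Real.exp 2 := by
    have := mul_lt_mul_of_pos_right hc2 (by positivity : (0:ℝ) < Real.exp 2 ^ 2)
    linarith [hie ▸ this]
  have hsplit : s ^ 2 * Real.exp 2 ^ 2 + co ^ 2 * Real.exp 2 ^ 2 = Real.exp 2 ^ 2 := by
    rw [← add_mul, hpy, one_mul]
  have h49 : (49:ℝ) < Real.exp 2 ^ 2 := by nlinarith
  linarith

set_option maxHeartbeats 1000000 in
lemma orbit_re_lb (κ : ℂ) (n : ℕ) (h : ExpBounded κ n) :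
    ∀ k, k + 1 < n → F^[k] (κ.re - 1) + 1 ≤ ((E κ)^[k] κ).re := by
  obtain ⟨ha4, hIm, hRe⟩ := h
  intro k
  induction k with
  | zero => intro _; simpa using ha4
  | succ k ih =>
    intro hk
    have ihx : F^[k] (κ.re - 1) + 1 ≤ ((E κ)^[k] κ).re := ih (by omega)
    set z := (E κ)^[k] κ with hz
    have hrec_re : ((E κ)^[k+1] κ).re = Real.exp z.re * Real.cos z.im + κ.re := by
      rw [Function.iterate_succ_apply']
      simp [E, Complex.exp_re]; rfl
    have hrec_im : ((E κ)^[k+1] κ).im = Real.exp z.re * Real.sin z.im + κ.im := by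
      rw [Function.iterate_succ_apply']
      simp [E, Complex.exp_im]; rfl
    have hpos : 0 < ((E κ)^[k+1] κ).re := hRe (k+1) hk
    have hy1 : |((E κ)^[k+1] κ).im| < F^[k+1] (κ.re - 2) := hIm (k+1) (by omega)
    have hy0 : |κ.im| < κ.re - 2 := by simpa using hIm 0 (by omega)
    have hca : κ.re - 2 ≤ F^[k] (κ.re - 2) := le_F_iter k _
    have hba : κ.re - 1 ≤ F^[k] (κ.re - 1) := le_F_iter k _
    have hbc : F^[k] (κ.re - 2) + 1 ≤ F^[k] (κ.re - 1) :=
      F_gap k _ _ (by linarith) (by linarith)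
    have hxc : F^[k] (κ.re - 2) + 2 ≤ z.re := by linarith
    have hXpos := Real.exp_pos z.re
    -- sin bound
    have hsin : Real.exp z.re * |Real.sin z.im| ≤ Real.exp (F^[k] (κ.re - 2)) + κ.re := by
      have heq : Real.exp z.re * Real.sin z.im = ((E κ)^[k+1] κ).im - κ.im := by
        rw [hrec_im]; ring
      have h1 : |Real.exp z.re * Real.sin z.im| ≤ |((E κ)^[k+1] κ).im| + |κ.im| := by
        rw [heq]; exact abs_sub _ _
      have h2 : F^[k+1] (κ.re - 2) = Real.exp (F^[k] (κ.re - 2)) - 1 := by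
        rw [Function.iterate_succ_apply']; rfl
      rw [abs_mul, abs_of_pos hXpos] at h1
      rw [h2] at hy1
      linarith
    -- cos lower bound
    have hcos : Real.exp (-1) ≤ Real.cos z.im := by
      by_contra hcon
      push_neg at hcon
      have h0 : 0 < Real.exp z.re * Real.cos z.im + κ.re := by
        rw [hrec_re] at hpos; exact hpos
      have hcl : -Real.exp (-1) < Real.cos z.im := by
        have haa : κ.re ≤ Real.exp z.re * Real.exp (-1) := by
          rw [← Real.exp_add]
          have h1 : κ.re ≤ Real.exp (κ.re - 1) := by
            have := Real.add_one_le_exp (κ.re - 1); linarith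
          exact h1.trans (Real.exp_le_exp.2 (by linarith))
        nlinarith
      have hsinsmall : |Real.sin z.im| * Real.exp 2 ≤ 3 := by
        have hge : Real.exp (F^[k] (κ.re - 2)) * Real.exp 2 ≤ Real.exp z.re := by
          rw [← Real.exp_add]; exact Real.exp_le_exp.2 (by linarith)
        have hac : κ.re ≤ 2 * Real.exp (F^[k] (κ.re - 2)) := by
          have h1 : κ.re - 1 ≤ Real.exp (κ.re - 2) := by
            have := Real.add_one_le_exp (κ.re - 2); linarith
          have h2 : Real.exp (κ.re - 2) ≤ Real.exp (F^[k] (κ.re - 2)) :=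
            Real.exp_le_exp.2 hca
          have h3 : (1:ℝ) ≤ Real.exp (F^[k] (κ.re - 2)) :=
            Real.one_le_exp (by linarith)
          linarith
        have hCpos := Real.exp_pos (F^[k] (κ.re - 2))
        nlinarith [abs_nonneg (Real.sin z.im)]
      exact sin_cos_contradiction _ _ (Real.sin_sq_add_cos_sq z.im) hsinsmall hcon hcl
    -- conclude
    rw [hrec_re]
    have hFk1 : F^[k+1] (κ.re - 1) = Real.exp (F^[k] (κ.re - 1)) - 1 := by
      rw [Function.iterate_succ_apply']; rfl
    rw [hFk1]
    have h1 : Real.exp (F^[k] (κ.re - 1) + 1) * Real.exp (-1)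
        = Real.exp (F^[k] (κ.re - 1)) := by
      rw [← Real.exp_add]; ring_nf
    have h2 : Real.exp (F^[k] (κ.re - 1) + 1) ≤ Real.exp z.re := Real.exp_le_exp.2 ihx
    have h3 : Real.exp (F^[k] (κ.re - 1) + 1) * Real.exp (-1)
        ≤ Real.exp z.re * Real.cos z.im :=
      mul_le_mul h2 hcos (Real.exp_pos _).le (Real.exp_pos _).le
    rw [h1] at h3
    linarith

lemma abs_add_one_lb (u : ℂ) : ‖u‖ - 1 ≤ ‖u + 1‖ := by
  have h := norm_sub_norm_le u (-1 : ℂ)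
  simpa [sub_neg_eq_add] using h

/-- If Re(κ) ≥ 2 and κ is exponentially κ-bounded for n ≥ 2 steps, then
    |f_n'(κ)| ≥ F^{n-1}(Re(κ) - 1). -/
theorem param_deriv_lower_bound (κ : ℂ) (n : ℕ) (hn : 2 ≤ n) (hκ : 2 ≤ κ.re)
    (h : ExpBounded κ n) :
    ‖deriv (f n) κ‖ ≥ F^[n - 1] (κ.re - 1) := by
  have ha4 : 4 ≤ κ.re := h.1
  have hB := orbit_re_lb κ n h
  have hD : ∀ m, 1 ≤ m → m + 1 ≤ n → F^[m] (κ.re - 1) ≤ ‖D κ m‖ := by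
    intro m
    induction m with
    | zero => intro h1; exact absurd h1 (by norm_num)
    | succ m ih =>
      intro _ hmn
      rcases Nat.eq_zero_or_pos m with rfl | hm
      · -- base case m = 1
        simp only [Nat.zero_add]
        have hD1 : D κ 1 = Complex.exp κ + 1 := by simp [D]
        rw [hD1]
        have habs : ‖Complex.exp κ‖ = Real.exp κ.re := Complex.norm_exp κ
        have htri := abs_add_one_lb (Complex.exp κ)
        have hexp : Real.exp (κ.re - 1) ≤ Real.exp κ.re := Real.exp_le_exp.2 (by linarith)
        have hF1 : F^[1] (κ.re - 1) = Real.exp (κ.re - 1) - 1 := by simp [F]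
        rw [hF1]
        rw [habs] at htri
        linarith
      · -- inductive step
        have hDm : F^[m] (κ.re - 1) ≤ ‖D κ m‖ := ih hm (by omega)
        have hx : F^[m] (κ.re - 1) + 1 ≤ ((E κ)^[m] κ).re := hB m (by omega)
        have hb1 : (1:ℝ) ≤ F^[m] (κ.re - 1) := by
          have := le_F_iter m (κ.re - 1); linarith
        have hDs : D κ (m+1) = Complex.exp ((E κ)^[m] κ) * D κ m + 1 := rfl
        rw [hDs]
        have htri := abs_add_one_lb (Complex.exp ((E κ)^[m] κ) * D κ m)
        have hmul : ‖Complex.exp ((E κ)^[m] κ) * D κ m‖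
            = Real.exp ((E κ)^[m] κ).re * ‖D κ m‖ := by
          rw [norm_mul, Complex.norm_exp]
        rw [hmul] at htri
        have hFs : F^[m+1] (κ.re - 1) = Real.exp (F^[m] (κ.re - 1)) - 1 := by
          rw [Function.iterate_succ_apply']; rfl
        rw [hFs]
        have h1 : Real.exp (F^[m] (κ.re - 1)) ≤ Real.exp ((E κ)^[m] κ).re :=
          Real.exp_le_exp.2 (by linarith)
        have h2 : Real.exp (F^[m] (κ.re - 1))
            ≤ Real.exp ((E κ)^[m] κ).re * ‖D κ m‖ := by
          nlinarith [Real.exp_pos (F^[m] (κ.re - 1)), Real.exp_pos ((E κ)^[m] κ).re]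
        linarith
  have hfd : deriv (f n) κ = D κ (n - 1) := by
    have hf : f n = fun z : ℂ => (E z)^[n - 1] z := rfl
    rw [hf, (hasDerivAt_iter κ (n - 1)).deriv]
  rw [ge_iff_le, hfd]
  exact hD (n - 1) (by omega) (by omega)
end

section
/- Let κ ∈ ℂ with Re(κ) ≥ 4 and let n ≥ 2. Suppose κ is exponentially κ-bounded for n steps (Re(κ) ≥ 4, |Im(E_κ^{k-1}(κ))| < F^{k-1}(Re(κ)-2) for 1 ≤ k ≤ n, Re(E_κ^{k-1}(κ)) > 0 for 1 ≤ k ≤ n-1) and that Re(E_κ^{n-1}(κ)) < 0. Then Re(E_κ^{n-1}(κ)) < -F^{n-1}(Re(κ) - 1), where F(t) = e^t - 1. -/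
lemma F_iter_ge (c : ℝ) (hc : 0 ≤ c) : ∀ k, c ≤ F^[k] c := by
  intro k
  induction k with
  | zero => simp
  | succ k ih =>
    rw [Function.iterate_succ_apply']
    have h1 : (0:ℝ) ≤ F^[k] c := le_trans hc ih
    have h2 := Real.add_one_le_exp (F^[k] c)
    simp only [F]
    linarith

lemma A_le_C (c : ℝ) (hc : 1 ≤ c) : ∀ k, F^[k] (c - 1) ≤ F^[k] c - 1 := by
  intro k
  induction k with
  | zero => simp
  | succ k ih =>
    rw [Function.iterate_succ_apply', Function.iterate_succ_apply']
    have hC : c ≤ F^[k] c := F_iter_ge c (by linarith) k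
    have h1 : Real.exp (F^[k] (c-1)) ≤ Real.exp (F^[k] c - 1) := Real.exp_le_exp.2 (by linarith)
    have h2 : Real.exp (F^[k] c - 1) * Real.exp 1 = Real.exp (F^[k] c) := by
      rw [← Real.exp_add]; ring_nf
    have h3 : (1:ℝ) ≤ Real.exp (F^[k] c - 1) := Real.one_le_exp (by linarith)
    have h4 : (2:ℝ) ≤ Real.exp 1 := by
      have := Real.exp_one_gt_d9; linarith
    simp only [F]
    nlinarith

lemma four_le (c C : ℝ) (hc : 3 ≤ c) (hC : c ≤ C) : 4 * (c + 1) ≤ Real.exp C := by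
  have h1 : Real.exp C = Real.exp 3 * Real.exp (C - 3) := by rw [← Real.exp_add]; ring_nf
  have h2 : (19:ℝ) ≤ Real.exp 3 := by
    have h := Real.exp_one_gt_d9
    have h3 : Real.exp 3 = Real.exp 1 * Real.exp 1 * Real.exp 1 := by
      rw [← Real.exp_add, ← Real.exp_add]; norm_num
    nlinarith
  have h3 : C - 2 ≤ Real.exp (C - 3) := by
    have := Real.add_one_le_exp (C - 3); linarith
  nlinarith [Real.exp_pos (C-3)]

lemma key_cos (c C x co si : ℝ) (hc : 3 ≤ c) (hC : c ≤ C) (hx : C + 1 ≤ x)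
    (hcs : co ^ 2 + si ^ 2 = 1)
    (hs : |Real.exp x * si| ≤ 2 / 3 * Real.exp C) :
    2 * Real.exp C ≤ Real.exp x * |co| := by
  have hT : 0 < Real.exp C := Real.exp_pos C
  have hE : Real.exp C * Real.exp 1 ≤ Real.exp x := by
    rw [← Real.exp_add]; exact Real.exp_le_exp.2 (by linarith)
  have he1 : (2.7:ℝ) ≤ Real.exp 1 := by have := Real.exp_one_gt_d9; linarith
  have hxpos : 0 < Real.exp x := Real.exp_pos x
  have hE2 : (Real.exp C * Real.exp 1)^2 ≤ (Real.exp x)^2 := by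
    have hnn : (0:ℝ) ≤ Real.exp C * Real.exp 1 := by positivity
    nlinarith
  have h1 : (Real.exp x * co)^2 + (Real.exp x * si)^2 = (Real.exp x)^2 := by nlinarith [hcs]
  have h2 : (Real.exp x * si)^2 ≤ (2/3 * Real.exp C)^2 := by
    nlinarith [abs_nonneg (Real.exp x * si), sq_abs (Real.exp x * si)]
  have he2 : (729/100) * (Real.exp C)^2 ≤ (Real.exp C * Real.exp 1)^2 := by
    nlinarith [mul_nonneg (mul_nonneg (sq_nonneg (Real.exp C)) (sub_nonneg.2 he1))
      (by linarith : (0:ℝ) ≤ Real.exp 1 + 2.7)]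
  have h3 : (2 * Real.exp C)^2 ≤ (Real.exp x * co)^2 := by nlinarith
  have h4 : 0 ≤ Real.exp x * |co| := by positivity
  have h5 : (Real.exp x * |co|)^2 = (Real.exp x * co)^2 := by
    rw [mul_pow, mul_pow, sq_abs]
  nlinarith

/-- Core step estimate: under the invariant, the real part of exp at step k is large. -/
lemma step_cos (κ : ℂ) (n : ℕ) (h : ExpBounded κ n) (k : ℕ) (hk : k + 1 < n)
    (hx : F^[k] (κ.re - 1) + 1 ≤ ((E κ)^[k] κ).re) :
    2 * Real.exp (F^[k] (κ.re - 1)) ≤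
      Real.exp ((E κ)^[k] κ).re * |Real.cos ((E κ)^[k] κ).im| := by
  obtain ⟨h4, him, hpos⟩ := h
  have hc : 3 ≤ κ.re - 1 := by linarith
  set c := κ.re - 1 with hcdef
  set C := F^[k] c with hCdef
  set x := ((E κ)^[k] κ).re
  set y := ((E κ)^[k] κ).im
  have hC : c ≤ C := F_iter_ge c (by linarith) k
  have hT : 0 < Real.exp C := Real.exp_pos C
  have he1 : (2.7:ℝ) ≤ Real.exp 1 := by have := Real.exp_one_gt_d9; linarith
  have h4c : 4 * (c + 1) ≤ Real.exp C := four_le c C hc hC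
  -- imaginary part equation
  have imeq : ((E κ)^[k+1] κ).im = Real.exp x * Real.sin y + κ.im := by
    rw [Function.iterate_succ_apply']
    simp [E, Complex.exp_im, Complex.add_im]; rfl
  have him1 : |((E κ)^[k+1] κ).im| < F^[k+1] (κ.re - 2) := him (k+1) hk
  have him0 : |κ.im| < κ.re - 2 := by
    have := him 0 (by omega); simpa using this
  have hsin0 : |Real.exp x * Real.sin y| ≤ |((E κ)^[k+1] κ).im| + |κ.im| := by
    have : Real.exp x * Real.sin y = ((E κ)^[k+1] κ).im - κ.im := by rw [imeq]; ring
    rw [this]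
    exact abs_sub _ _
  -- bound F^[k+1] (κ.re - 2)
  have hA : F^[k+1] (κ.re - 2) ≤ Real.exp (C - 1) - 1 := by
    have h1 : F^[k] (κ.re - 2) ≤ C - 1 := by
      have := A_le_C c (by linarith) k
      have he : κ.re - 2 = c - 1 := by rw [hcdef]; ring
      rw [he]; exact this
    rw [Function.iterate_succ_apply']
    simp only [F]
    have := Real.exp_le_exp.2 h1
    linarith
  have hexpC1 : Real.exp (C - 1) * Real.exp 1 = Real.exp C := by
    rw [← Real.exp_add]; ring_nf
  have hC1pos : 0 < Real.exp (C - 1) := Real.exp_pos _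
  have hsin : |Real.exp x * Real.sin y| ≤ 2 / 3 * Real.exp C := by
    have hb1 : |Real.exp x * Real.sin y| ≤ (Real.exp (C - 1) - 1) + (κ.re - 2) := by
      linarith
    -- exp(C-1) ≤ exp C / 2.7  and κ.re - 2 = c - 1 ≤ exp C / 4
    nlinarith
  exact key_cos c C x _ _ hc hC hx (Real.cos_sq_add_sin_sq y) hsin

/-- If κ is exponentially κ-bounded for n ≥ 2 steps and Re(E_κ^{n-1}(κ)) < 0, then
    Re(E_κ^{n-1}(κ)) < -F^{n-1}(Re(κ) - 1). -/
theorem re_strongly_negative (κ : ℂ) (n : ℕ) (hn : 2 ≤ n) (h : ExpBounded κ n)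
    (hneg : ((E κ)^[n - 1] κ).re < 0) :
    ((E κ)^[n - 1] κ).re < -F^[n - 1] (κ.re - 1) := by
  obtain ⟨h4, him, hpos⟩ := h
  have hc : 3 ≤ κ.re - 1 := by linarith
  have inv : ∀ k, k + 1 < n → F^[k] (κ.re - 1) + 1 ≤ ((E κ)^[k] κ).re := by
    intro k
    induction k with
    | zero => intro _; simp
    | succ k ih =>
      intro hk
      have ihk := ih (by omega)
      have hcos := step_cos κ n ⟨h4, him, hpos⟩ k (by omega) ihk
      have req : ((E κ)^[k+1] κ).re
          = Real.exp ((E κ)^[k] κ).re * Real.cos ((E κ)^[k] κ).im + κ.re := by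
        rw [Function.iterate_succ_apply']
        simp [E, Complex.exp_re, Complex.add_re]
      have hp : 0 < ((E κ)^[k+1] κ).re := hpos (k+1) hk
      have h4c : 4 * ((κ.re - 1) + 1) ≤ Real.exp (F^[k] (κ.re - 1)) :=
        four_le _ _ hc (F_iter_ge _ (by linarith) k)
      set C := F^[k] (κ.re - 1) with hCdef
      set x := ((E κ)^[k] κ).re
      set y := ((E κ)^[k] κ).im
      have hT : 0 < Real.exp C := Real.exp_pos C
      have hpc : 2 * Real.exp C ≤ Real.exp x * Real.cos y := by
        rcases abs_cases (Real.cos y) with ⟨he, _⟩ | ⟨he, _⟩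
        · rw [he] at hcos; exact hcos
        · exfalso
          rw [he] at hcos
          rw [req] at hp
          nlinarith
      have hF : F^[k+1] (κ.re - 1) = Real.exp C - 1 := by
        rw [Function.iterate_succ_apply']; simp [F]; rfl
      rw [req, hF]
      linarith
  obtain ⟨m, hm⟩ : ∃ m, n - 1 = m + 1 := ⟨n - 2, by omega⟩
  rw [hm] at hneg ⊢
  have ihm := inv m (by omega)
  have hcos := step_cos κ n ⟨h4, him, hpos⟩ m (by omega) ihm
  have req : ((E κ)^[m+1] κ).re
      = Real.exp ((E κ)^[m] κ).re * Real.cos ((E κ)^[m] κ).im + κ.re := by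
    rw [Function.iterate_succ_apply']
    simp [E, Complex.exp_re, Complex.add_re]
  have h4c : 4 * ((κ.re - 1) + 1) ≤ Real.exp (F^[m] (κ.re - 1)) :=
    four_le _ _ hc (F_iter_ge _ (by linarith) m)
  set C := F^[m] (κ.re - 1) with hCdef
  set x := ((E κ)^[m] κ).re
  set y := ((E κ)^[m] κ).im
  have hT : 0 < Real.exp C := Real.exp_pos C
  have hnc : Real.exp x * Real.cos y ≤ -(2 * Real.exp C) := by
    rcases abs_cases (Real.cos y) with ⟨he, _⟩ | ⟨he, _⟩
    · exfalso
      rw [he] at hcos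
      rw [req] at hneg
      nlinarith
    · rw [he] at hcos
      nlinarith
  have hF : F^[m+1] (κ.re - 1) = Real.exp C - 1 := by
    rw [Function.iterate_succ_apply']; simp [F]; rfl
  rw [req, hF]
  linarith
end
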